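/- Let G be a 2-connected graph of diameter d ≥ 2, let x, y be vertices with d(x,y) = d, let P be a shortest (x,y)-path, and let H be a component of G - {x,y} not containing P - {x,y}. If x' is a neighbor of x in H and y' is the neighbor of y on P, then d(x', y') = d; in particular x' is a peripheral vertex. -/

import Mathlib

open SimpleGraph

/-- `G - S` is disconnected: some two remaining vertices are not connected. -/
def IsVertexCut {V : Type*} (G : SimpleGraph V) (S : Set V) : Prop :=
  ¬ (G.induce Sᶜ).Preconnected

/-- `G` is `k`-connected. -/
def KConnected {V : Type*} [Fintype V] (G : SimpleGraph V) (k : ℕ) : Prop :=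
  k < Fintype.card V ∧ ∀ S : Finset V, S.card < k → ¬ IsVertexCut G ↑S

/-- `S` is an independent set of `G`. -/
def IsIndep {V : Type*} (G : SimpleGraph V) (S : Set V) : Prop :=
  S.Pairwise fun u v => ¬ G.Adj u v

/-- `v` is a peripheral vertex: its eccentricity equals the diameter of `G`. -/
def IsPeripheral {V : Type*} (G : SimpleGraph V) (v : V) : Prop :=
  (⨆ u, G.edist v u) = G.ediam

lemma reachable_induce_of_walk {V : Type*} (G : SimpleGraph V) (s : Set V) {a b : V}
    (w : G.Walk a b) (h : ∀ v ∈ w.support, v ∈ s) :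
    (G.induce s).Reachable ⟨a, h a w.start_mem_support⟩ ⟨b, h b w.end_mem_support⟩ := by
  induction w with
  | nil => rfl
  | @cons u v c hadj q ih =>
    have hu : u ∈ s := h u (by simp)
    have hv : v ∈ s := h v (by simp)
    have h' : ∀ z ∈ q.support, z ∈ s := fun z hz => h z (by simp [hz])
    have hstep : (G.induce s).Adj ⟨u, hu⟩ ⟨v, hv⟩ := by
      simp [hadj]
    exact (hstep.reachable).trans (ih h')

theorem stmt12 (V : Type) [Fintype V] (G : SimpleGraph V) (hconn : KConnected G 2)
    (d : ℕ) (hd : 2 ≤ d) (hdiam : G.ediam = d)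
    (x y : V) (hxy : G.edist x y = d)
    (p : G.Walk x y) (hp : p.IsPath) (hlen : p.length = d)
    (C : (G.induce ({x, y} : Set V)ᶜ).ConnectedComponent)
    (hC : ∀ (v : V) (hv : v ∈ ({x, y} : Set V)ᶜ), v ∈ p.support →
      (G.induce ({x, y} : Set V)ᶜ).connectedComponentMk ⟨v, hv⟩ ≠ C)
    (x' : V) (hx' : x' ∈ ({x, y} : Set V)ᶜ) (hadjx : G.Adj x x')
    (hx'C : (G.induce ({x, y} : Set V)ᶜ).connectedComponentMk ⟨x', hx'⟩ = C)
    (y' : V) (hy' : y' ∈ p.support) (hadjy : G.Adj y' y) (hy'ne : y' ≠ x) :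
    G.edist x' y' = d ∧ IsPeripheral G x' := by
  classical
  have hy'y : y' ≠ y := hadjy.ne
  have hy'c : y' ∈ ({x, y} : Set V)ᶜ := by
    simp [hy'ne, hy'y]
  have hub : G.edist x' y' ≤ (d : ℕ∞) := hdiam ▸ edist_le_ediam
  have hne : G.edist x' y' ≠ ⊤ := fun h => by simp [h] at hub
  obtain ⟨w, hw⟩ := exists_walk_of_edist_ne_top hne
  -- the walk must hit x or y
  have hxy_mem : x ∈ w.support ∨ y ∈ w.support := by
    by_contra hcon
    push_neg at hcon
    have hall : ∀ v ∈ w.support, v ∈ ({x, y} : Set V)ᶜ := by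
      intro v hv
      simp only [Set.mem_compl_iff, Set.mem_insert_iff, Set.mem_singleton_iff]
      push_neg
      exact ⟨fun h => hcon.1 (h ▸ hv), fun h => hcon.2 (h ▸ hv)⟩
    have hr := reachable_induce_of_walk G _ w hall
    have : (G.induce ({x, y} : Set V)ᶜ).connectedComponentMk ⟨x', hx'⟩ =
        (G.induce ({x, y} : Set V)ᶜ).connectedComponentMk ⟨y', hy'c⟩ :=
      ConnectedComponent.sound hr
    exact hC y' hy'c hy' (this ▸ hx'C)
  -- key distance facts
  have hxy' : G.edist y' y = 1 := edist_eq_one_iff_adj.mpr hadjy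
  have hxx' : G.edist x x' = 1 := edist_eq_one_iff_adj.mpr hadjx
  have hd1 : ((d - 1 : ℕ) : ℕ∞) + 1 = (d : ℕ∞) := by
    have h : (d - 1) + 1 = d := by omega
    exact_mod_cast congrArg (fun n : ℕ => (n : ℕ∞)) h
  -- d(x, y') ≥ d - 1
  have hxy'low : ((d - 1 : ℕ) : ℕ∞) ≤ G.edist x y' := by
    have htri : G.edist x y ≤ G.edist x y' + G.edist y' y := SimpleGraph.edist_triangle
    rw [hxy', hxy] at htri
    rw [← hd1] at htri
    exact (WithTop.add_le_add_iff_right ENat.one_ne_top).mp htri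
  -- d(x', y) ≥ d - 1
  have hx'ylow : ((d - 1 : ℕ) : ℕ∞) ≤ G.edist x' y := by
    have htri : G.edist x y ≤ G.edist x x' + G.edist x' y := SimpleGraph.edist_triangle
    rw [hxx', hxy, add_comm] at htri
    rw [← hd1] at htri
    exact (WithTop.add_le_add_iff_right ENat.one_ne_top).mp htri
  have hx'x : (1 : ℕ∞) ≤ G.edist x' x := by
    have : x' ≠ x := fun h => (h ▸ hadjx).ne rfl
    exact ENat.one_le_iff_ne_zero.mpr
      (by simp [SimpleGraph.edist_eq_zero_iff, this])
  have hlow : (d : ℕ∞) ≤ G.edist x' y' := by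
    rcases hxy_mem with hx_mem | hy_mem
    · -- split walk at x
      have hsplit := congr_arg Walk.length (w.take_spec hx_mem)
      rw [Walk.length_append] at hsplit
      have h1 : G.edist x' x ≤ ((w.takeUntil x hx_mem).length : ℕ∞) := edist_le _
      have h2 : G.edist x y' ≤ ((w.dropUntil x hx_mem).length : ℕ∞) := edist_le _
      calc (d : ℕ∞) = ((d - 1 : ℕ) : ℕ∞) + 1 := hd1.symm
        _ = 1 + ((d - 1 : ℕ) : ℕ∞) := by rw [add_comm]
        _ ≤ G.edist x' x + G.edist x y' := add_le_add hx'x hxy'low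
        _ ≤ ((w.takeUntil x hx_mem).length : ℕ∞) + ((w.dropUntil x hx_mem).length : ℕ∞) :=
            add_le_add h1 h2
        _ = (w.length : ℕ∞) := by rw [← Nat.cast_add, hsplit]
        _ = G.edist x' y' := hw
    · -- split walk at y
      have hsplit := congr_arg Walk.length (w.take_spec hy_mem)
      rw [Walk.length_append] at hsplit
      have h1 : G.edist x' y ≤ ((w.takeUntil y hy_mem).length : ℕ∞) := edist_le _
      have h2 : G.edist y y' ≤ ((w.dropUntil y hy_mem).length : ℕ∞) := edist_le _
      have hyy' : G.edist y y' = 1 := by rw [SimpleGraph.edist_comm]; exact hxy'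
      calc (d : ℕ∞) = ((d - 1 : ℕ) : ℕ∞) + 1 := hd1.symm
        _ ≤ G.edist x' y + G.edist y y' := by rw [hyy']; exact add_le_add hx'ylow le_rfl
        _ ≤ ((w.takeUntil y hy_mem).length : ℕ∞) + ((w.dropUntil y hy_mem).length : ℕ∞) :=
            add_le_add h1 h2
        _ = (w.length : ℕ∞) := by rw [← Nat.cast_add, hsplit]
        _ = G.edist x' y' := hw
  have hmain : G.edist x' y' = d := le_antisymm hub hlow
  refine ⟨hmain, ?_⟩
  unfold IsPeripheral
  refine le_antisymm (iSup_le fun u => edist_le_ediam) ?_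
  rw [hdiam, ← hmain]
  exact le_iSup (fun u => G.edist x' u) y'
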